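/- Fix c > 0, let R* be the unique positive real with (ln 2) · R* · 2^{R*} = 1/c, and define f(R) = R · e^{−c(2^R − 1)}. Then for any reals 0 < a ≤ b, the point R_opt = max(min(b, R*), a) satisfies R_opt ∈ [a, b] and f(R_opt) ≥ f(R) for all R ∈ [a, b]. -/

import Mathlib

open Real

/-- Optimality of `R_opt = max (min b R*) a` for `f(R) = R e^{-c(2^R-1)}` over `[a, b]`,
where `R*` is the unique positive root of `(ln 2) R 2^R = 1/c`. -/
theorem stmt_12 (c : ℝ) (hc : 0 < c) (Rs : ℝ) (hRs : 0 < Rs)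
    (hRs_eq : Real.log 2 * Rs * (2 : ℝ) ^ Rs = 1 / c)
    (a b : ℝ) (ha : 0 < a) (hab : a ≤ b) :
    max (min b Rs) a ∈ Set.Icc a b ∧
    ∀ R ∈ Set.Icc a b,
      R * Real.exp (-c * ((2 : ℝ) ^ R - 1)) ≤
        max (min b Rs) a * Real.exp (-c * ((2 : ℝ) ^ (max (min b Rs) a) - 1)) := by
  set F : ℝ → ℝ := fun R => R * Real.exp (-c * ((2 : ℝ) ^ R - 1)) with hF
  -- derivative of F
  have hder : ∀ x : ℝ, HasDerivAt F
      (Real.exp (-c * ((2:ℝ)^x - 1)) * (1 - c * Real.log 2 * x * (2:ℝ)^x)) x := by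
    intro x
    have h1 : HasDerivAt (fun R : ℝ => (2:ℝ) ^ R) ((2:ℝ)^x * Real.log 2) x :=
      (Real.hasStrictDerivAt_const_rpow two_pos x).hasDerivAt
    have h2 : HasDerivAt (fun R : ℝ => -c * ((2:ℝ)^R - 1))
        (-c * ((2:ℝ)^x * Real.log 2)) x := (h1.sub_const 1).const_mul (-c)
    have h3 := h2.exp
    have h4 : HasDerivAt (fun y : ℝ => id y * Real.exp (-c * ((2:ℝ)^y - 1)))
        (1 * Real.exp (-c * ((2:ℝ)^x - 1)) + id x * (Real.exp (-c * ((2:ℝ)^x - 1)) * (-c * ((2:ℝ)^x * Real.log 2)))) x :=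
      (hasDerivAt_id x).mul h3
    convert h4 using 1
    simp only [id]
    ring
    simp only [id]
    ring
  have hdiff : Differentiable ℝ F := fun x => (hder x).differentiableAt
  have hderiv : ∀ x : ℝ, deriv F x =
      Real.exp (-c * ((2:ℝ)^x - 1)) * (1 - c * Real.log 2 * x * (2:ℝ)^x) :=
    fun x => (hder x).deriv
  have hlog2 : (0:ℝ) < Real.log 2 := Real.log_pos (by norm_num)
  -- key: g x = x * 2^x strictly increasing on [0,∞)
  have hg : ∀ x y : ℝ, 0 ≤ x → x < y → x * (2:ℝ)^x < y * (2:ℝ)^y := by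
    intro x y hx hxy
    have h2xy : (2:ℝ)^x ≤ (2:ℝ)^y :=
      Real.rpow_le_rpow_left_iff (by norm_num) |>.mpr hxy.le
    have hy2 : (0:ℝ) < (2:ℝ)^y := Real.rpow_pos_of_pos two_pos y
    calc x * (2:ℝ)^x ≤ x * (2:ℝ)^y := by nlinarith
      _ < y * (2:ℝ)^y := by nlinarith
  have hone : c * Real.log 2 * Rs * (2:ℝ)^Rs = 1 := by
    field_simp at hRs_eq
    nlinarith
  -- monotone on [0, Rs]
  have hmono : MonotoneOn F (Set.Icc 0 Rs) := by
    apply (strictMonoOn_of_deriv_pos (convex_Icc 0 Rs) hdiff.continuous.continuousOn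
      ?_).monotoneOn
    intro x hx
    rw [interior_Icc] at hx
    rw [hderiv]
    have hexp := Real.exp_pos (-c * ((2:ℝ)^x - 1))
    have hlt : x * (2:ℝ)^x < Rs * (2:ℝ)^Rs := hg x Rs hx.1.le hx.2
    have : c * Real.log 2 * x * (2:ℝ)^x < 1 := by
      nlinarith [mul_lt_mul_of_pos_left hlt (mul_pos hc hlog2)]
    nlinarith
  -- antitone on [Rs, ∞)
  have hanti : AntitoneOn F (Set.Ici Rs) := by
    apply antitoneOn_of_deriv_nonpos (convex_Ici Rs) hdiff.continuous.continuousOn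
      hdiff.differentiableOn
    intro x hx
    rw [interior_Ici] at hx
    rw [hderiv]
    have hexp := Real.exp_pos (-c * ((2:ℝ)^x - 1))
    have hlt : Rs * (2:ℝ)^Rs < x * (2:ℝ)^x := hg Rs x hRs.le hx
    have : 1 < c * Real.log 2 * x * (2:ℝ)^x := by
      nlinarith [mul_lt_mul_of_pos_left hlt (mul_pos hc hlog2)]
    nlinarith
  have hmem : max (min b Rs) a ∈ Set.Icc a b :=
    ⟨le_max_right _ _, max_le ((min_le_left _ _)) hab⟩
  refine ⟨hmem, ?_⟩
  intro R hR
  rcases le_or_gt Rs a with h1 | h1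
  · have hm : max (min b Rs) a = a := max_eq_right ((min_le_right b Rs).trans h1)
    rw [hm]
    exact hanti (Set.mem_Ici.mpr h1) (Set.mem_Ici.mpr (h1.trans hR.1)) hR.1
  rcases le_or_gt b Rs with h2 | h2
  · have hm : max (min b Rs) a = b := by rw [min_eq_left h2, max_eq_left hab]
    rw [hm]
    exact hmono ⟨(ha.trans_le hR.1).le, hR.2.trans h2⟩ ⟨(ha.trans_le hab).le, h2⟩ hR.2
  · have hm : max (min b Rs) a = Rs := by rw [min_eq_right h2.le, max_eq_left h1.le]
    rw [hm]
    rcases le_total R Rs with h3 | h3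
    · exact hmono ⟨(ha.trans_le hR.1).le, h3⟩ ⟨hRs.le, le_refl Rs⟩ h3
    · exact hanti (Set.mem_Ici.mpr le_rfl) (Set.mem_Ici.mpr h3) h3
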